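/- Let C(x) = (1-√(1-4x))/(2x) be the Catalan generating function. Then substituting b_1x³/(1-b_0x)² for x in C(x)^m and multiplying by 1/(1-b_0x)^m yields g(x)^m where g(x) = (1 - b_0x - √((1-b_0x)² - 4b_1x³))/(2b_1x³); i.e., (1/(1-b_0x)^m)·C(b_1x³/(1-b_0x)²)^m = g(x)^m. -/

import Mathlib

open PowerSeries

/-- Substitution of the power series `g` (with zero constant term) into `f`. -/
noncomputable def pscomp (f g : PowerSeries ℚ) : PowerSeries ℚ :=
  PowerSeries.mk fun N => ∑ n ∈ Finset.range (N + 1), coeff n f * coeff N (g ^ n)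

lemma aux_pow_coeff {a : PowerSeries ℚ} (ha : constantCoeff a = 0) {N n : ℕ}
    (h : N < n) : coeff N (a ^ n) = 0 := by
  have hd : (X : PowerSeries ℚ) ^ n ∣ a ^ n :=
    pow_dvd_pow_of_dvd (PowerSeries.X_dvd_iff.mpr ha) n
  exact PowerSeries.X_pow_dvd_iff.mp hd N h

lemma aux_coeff_pscomp {a : PowerSeries ℚ} (ha : constantCoeff a = 0)
    (f : PowerSeries ℚ) {N M : ℕ} (h : N < M) :
    coeff N (pscomp f a) = coeff N ((trunc M f).eval₂ C a) := by
  rw [pscomp, coeff_mk, eval₂_trunc_eq_sum_range, map_sum]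
  have hsub : Finset.range (N + 1) ⊆ Finset.range M := Finset.range_subset_range.mpr h
  rw [Finset.sum_subset hsub]
  · apply Finset.sum_congr rfl
    intro i _
    rw [PowerSeries.coeff_C_mul]
  · intro i _ hi
    rw [Finset.mem_range, not_lt] at hi
    have : coeff N (a ^ i) = 0 := aux_pow_coeff ha (by omega)
    rw [this, mul_zero]

lemma aux_eval_coeff {a : PowerSeries ℚ} (ha : constantCoeff a = 0) {N : ℕ}
    {P Q : Polynomial ℚ} (h : ∀ i ≤ N, P.coeff i = Q.coeff i) :
    coeff N (P.eval₂ C a) = coeff N (Q.eval₂ C a) := by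
  have hdvd : (Polynomial.X : Polynomial ℚ) ^ (N + 1) ∣ P - Q :=
    Polynomial.X_pow_dvd_iff.mpr (fun d hd => by
      rw [Polynomial.coeff_sub, h d (Nat.lt_succ_iff.mp hd), sub_self])
  obtain ⟨R, hR⟩ := hdvd
  have hP : P = Q + Polynomial.X ^ (N + 1) * R := by linear_combination hR
  rw [hP, Polynomial.eval₂_add, Polynomial.eval₂_mul, Polynomial.eval₂_X_pow, map_add]
  have h0 : coeff N (a ^ (N + 1) * R.eval₂ C a) = 0 := by
    have hd2 : (X : PowerSeries ℚ) ^ (N + 1) ∣ a ^ (N + 1) * R.eval₂ C a :=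
      Dvd.dvd.mul_right (pow_dvd_pow_of_dvd (PowerSeries.X_dvd_iff.mpr ha) _) _
    exact PowerSeries.X_pow_dvd_iff.mp hd2 N (Nat.lt_succ_self N)
  rw [h0, add_zero]

lemma pscomp_mul {a : PowerSeries ℚ} (ha : constantCoeff a = 0) (f g : PowerSeries ℚ) :
    pscomp (f * g) a = pscomp f a * pscomp g a := by
  ext N
  rw [aux_coeff_pscomp ha (f * g) (Nat.lt_succ_self N)]
  have h1 : coeff N ((trunc (N + 1) (f * g)).eval₂ C a)
      = coeff N ((trunc (N + 1) f * trunc (N + 1) g).eval₂ C a) := by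
    apply aux_eval_coeff ha
    intro i hi
    rw [coeff_trunc, if_pos (Nat.lt_succ_of_le hi)]
    have := PowerSeries.coeff_mul_eq_coeff_trunc_mul_trunc f g (Nat.lt_succ_of_le hi)
    rw [this, ← Polynomial.coe_mul, Polynomial.coeff_coe]
  rw [h1, Polynomial.eval₂_mul, PowerSeries.coeff_mul, PowerSeries.coeff_mul]
  apply Finset.sum_congr rfl
  intro p hp
  rw [Finset.HasAntidiagonal.mem_antidiagonal] at hp
  rw [aux_coeff_pscomp ha f (show p.1 < N + 1 by omega),
    aux_coeff_pscomp ha g (show p.2 < N + 1 by omega)]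

lemma pscomp_add (a f g : PowerSeries ℚ) :
    pscomp (f + g) a = pscomp f a + pscomp g a := by
  ext N
  simp [pscomp, add_mul, Finset.sum_add_distrib]

lemma pscomp_one (a : PowerSeries ℚ) : pscomp 1 a = 1 := by
  ext N
  rw [pscomp, coeff_mk, Finset.sum_eq_single 0]
  · simp
  · intro i _ hi
    simp [PowerSeries.coeff_one, hi]
  · simp

lemma pscomp_X {a : PowerSeries ℚ} (ha : constantCoeff a = 0) : pscomp X a = a := by
  ext N
  rw [aux_coeff_pscomp ha X (show N < N + 2 by omega), trunc_X, Polynomial.eval₂_X]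

theorem stmt_13 (b₀ b₁ : ℚ) (Cat g : PowerSeries ℚ)
    (hC0 : constantCoeff Cat = 1) (hC : X * Cat ^ 2 - Cat + 1 = 0)
    (hg0 : constantCoeff g = 1)
    (hg : C b₁ * X ^ 3 * g ^ 2 - (1 - C b₀ * X) * g + 1 = 0)
    (m : ℕ) (hm : 1 ≤ m) :
    ((1 - C b₀ * X)⁻¹) ^ m *
      (pscomp Cat (C b₁ * X ^ 3 * ((1 - C b₀ * X)⁻¹) ^ 2)) ^ m = g ^ m := by
  set u : PowerSeries ℚ := 1 - C b₀ * X with hu_def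
  set a : PowerSeries ℚ := C b₁ * X ^ 3 * (u⁻¹) ^ 2 with ha_def
  have ha : constantCoeff a = 0 := by
    simp [ha_def]
  have hu : constantCoeff u = 1 := by
    simp [hu_def]
  have huA : u * u⁻¹ = 1 := PowerSeries.mul_inv_cancel u (by rw [hu]; norm_num)
  set S : PowerSeries ℚ := pscomp Cat a with hS_def
  have hCat : X * (Cat * Cat) + 1 = Cat := by linear_combination hC - sq Cat * X
  have hS : a * S ^ 2 + 1 = S := by
    have := congrArg (fun t => pscomp t a) hCat
    simpa [pscomp_add, pscomp_one, pscomp_mul ha, pscomp_X ha, ← hS_def, sq] using this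
  have key : C b₁ * X ^ 3 * (u⁻¹ * S) ^ 2 - u * (u⁻¹ * S) + 1 = 0 := by
    have h1 : u * (u⁻¹ * S) = S := by rw [← mul_assoc, huA, one_mul]
    have h2 : C b₁ * X ^ 3 * (u⁻¹ * S) ^ 2 = a * S ^ 2 := by rw [ha_def]; ring
    rw [h1, h2]
    linear_combination hS
  have heq : u⁻¹ * S = g := by
    have hz : (u⁻¹ * S - g) * (C b₁ * X ^ 3 * (u⁻¹ * S + g) - u) = 0 := by
      linear_combination key - hg
    rcases mul_eq_zero.mp hz with h0 | h0
    · exact sub_eq_zero.mp h0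
    · exfalso
      have := congrArg (constantCoeff) h0
      simp [hu] at this
  rw [← mul_pow, heq]
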